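/- Let (X, ‖·‖) be a real Banach space and let T : X → X be an enriched Bianchini contraction: there exist b ∈ [0,∞) and α ∈ [0,1) such that ‖b(u−v) + Tu − Tv‖ ≤ α·max{‖u − Tu‖, ‖v − Tv‖} for all u, v ∈ X with u ≠ v. Then T has a unique fixed point p ∈ X, and there exists λ ∈ (0,1] such that for every u₀ ∈ X the sequence defined by u_{n+1} = (1−λ)u_n + λT u_n (n ≥ 0) converges to p. -/

import Mathlib

/-- An enriched Bianchini contraction on a real Banach space has a unique fixed point `p`,
and there is `λ ∈ (0,1]` such that every Krasnoselskii iteration converges to `p`. -/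
theorem enriched_bianchini_contraction_fixedPoint
    {X : Type*} [NormedAddCommGroup X] [NormedSpace ℝ X] [CompleteSpace X]
    (T : X → X) (b α : ℝ) (hb : 0 ≤ b) (hα0 : 0 ≤ α) (hα : α < 1)
    (hT : ∀ u v : X, u ≠ v →
      ‖b • (u - v) + T u - T v‖ ≤ α * max ‖u - T u‖ ‖v - T v‖) :
    ∃ p : X, (T p = p ∧ ∀ q : X, T q = q → q = p) ∧
      ∃ lam : ℝ, 0 < lam ∧ lam ≤ 1 ∧
        ∀ u : ℕ → X, (∀ n : ℕ, u (n + 1) = (1 - lam) • u n + lam • T (u n)) →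
          Filter.Tendsto u Filter.atTop (nhds p) := by
  have hb1 : (0:ℝ) < b + 1 := by linarith
  set lam : ℝ := (b + 1)⁻¹ with hlam_def
  have hlam0 : 0 < lam := by positivity
  have hlam1 : lam ≤ 1 := by
    rw [hlam_def]
    rw [inv_le_one_iff₀]
    right; linarith
  have hlb : lam * b = 1 - lam := by
    rw [hlam_def]
    field_simp
    ring
  set S : X → X := fun u => (1 - lam) • u + lam • T u with hS
  have hdiff : ∀ u v : X, S u - S v = lam • (b • (u - v) + T u - T v) := by
    intro u v
    simp only [hS]
    match_scalars <;> linarith [hlb]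
  have hself : ∀ u : X, u - S u = lam • (u - T u) := by
    intro u
    simp only [hS]
    match_scalars <;> linarith [hlb]
  have hselfnorm : ∀ u : X, ‖u - S u‖ = lam * ‖u - T u‖ := by
    intro u
    rw [hself, norm_smul, Real.norm_eq_abs, abs_of_pos hlam0]
  have key : ∀ u v : X, ‖S u - S v‖ ≤ α * max ‖u - S u‖ ‖v - S v‖ := by
    intro u v
    by_cases huv : u = v
    · subst huv
      simp only [sub_self, norm_zero]
      positivity
    · rw [hdiff, norm_smul, Real.norm_eq_abs, abs_of_pos hlam0, hselfnorm, hselfnorm]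
      have hmax : max (lam * ‖u - T u‖) (lam * ‖v - T v‖)
          = lam * max ‖u - T u‖ ‖v - T v‖ := (mul_max_of_nonneg _ _ hlam0.le).symm
      rw [hmax]
      calc lam * ‖b • (u - v) + T u - T v‖
          ≤ lam * (α * max ‖u - T u‖ ‖v - T v‖) := by
            exact mul_le_mul_of_nonneg_left (hT u v huv) hlam0.le
        _ = α * (lam * max ‖u - T u‖ ‖v - T v‖) := by ring
  -- every Picard sequence of S converges to a fixed point of S
  have conv : ∀ u : ℕ → X, (∀ n, u (n + 1) = S (u n)) →
      ∃ q : X, S q = q ∧ Filter.Tendsto u Filter.atTop (nhds q) := by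
    intro u hu
    set d : ℕ → ℝ := fun n => ‖u n - u (n + 1)‖ with hd_def
    have hd : ∀ n, d (n + 1) ≤ α * d n := by
      intro n
      have h1 : d (n + 1) ≤ α * max (d n) (d (n + 1)) := by
        have := key (u n) (u (n + 1))
        rw [← hu n, ← hu (n + 1)] at this
        exact this
      rcases le_total (d (n + 1)) (d n) with h | h
      · rwa [max_eq_left h] at h1
      · rw [max_eq_right h] at h1
        have hdn : 0 ≤ d n := norm_nonneg _
        have hdn1 : 0 ≤ d (n + 1) := norm_nonneg _
        have h2 : d (n + 1) * (1 - α) ≤ 0 * (1 - α) := by nlinarith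
        have h3 : d (n + 1) ≤ 0 := le_of_mul_le_mul_right h2 (by linarith)
        nlinarith [mul_nonneg hα0 hdn]
    have hgeo : ∀ n, d n ≤ d 0 * α ^ n := by
      intro n
      induction n with
      | zero => simp
      | succ n ih =>
        calc d (n + 1) ≤ α * d n := hd n
          _ ≤ α * (d 0 * α ^ n) := mul_le_mul_of_nonneg_left ih hα0
          _ = d 0 * α ^ (n + 1) := by ring
    have hcauchy : CauchySeq u := by
      apply cauchySeq_of_le_geometric α (d 0) hα
      intro n
      rw [dist_eq_norm]
      exact hgeo n
    obtain ⟨q, hq⟩ := cauchySeq_tendsto_of_complete hcauchy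
    have hd0 : Filter.Tendsto d Filter.atTop (nhds 0) := by
      apply squeeze_zero (fun n => norm_nonneg _) hgeo
      have := (tendsto_pow_atTop_nhds_zero_of_lt_one hα0 hα).const_mul (d 0)
      simpa using this
    have h1 : ∀ n, ‖u (n + 1) - S q‖ ≤ α * max (d n) ‖q - S q‖ := by
      intro n
      have := key (u n) q
      rw [← hu n] at this
      simpa [hd_def, hu n] using this
    have lim1 : Filter.Tendsto (fun n => ‖u (n + 1) - S q‖) Filter.atTop
        (nhds ‖q - S q‖) := by
      have : Filter.Tendsto (fun n => u (n + 1)) Filter.atTop (nhds q) :=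
        hq.comp (Filter.tendsto_add_atTop_nat 1)
      exact (this.sub tendsto_const_nhds).norm
    have lim2 : Filter.Tendsto (fun n => α * max (d n) ‖q - S q‖) Filter.atTop
        (nhds (α * max 0 ‖q - S q‖)) :=
      (hd0.max tendsto_const_nhds).const_mul α
    have hle : ‖q - S q‖ ≤ α * max 0 ‖q - S q‖ :=
      le_of_tendsto_of_tendsto' lim1 lim2 h1
    rw [max_eq_right (norm_nonneg _)] at hle
    have hz : ‖q - S q‖ = 0 := by nlinarith [norm_nonneg (q - S q)]
    have hfix : S q = q := by
      have := sub_eq_zero.mp (norm_eq_zero.mp hz)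
      exact this.symm
    exact ⟨q, hfix, hq⟩
  -- fixed points of S are fixed points of T and conversely
  have hST : ∀ p : X, S p = p ↔ T p = p := by
    intro p
    have hsp : S p - p = lam • (T p - p) := by
      simp only [hS]
      match_scalars <;> ring
    constructor
    · intro h
      have h0 : lam • (T p - p) = 0 := by rw [← hsp, h, sub_self]
      rcases smul_eq_zero.mp h0 with h' | h'
      · exact absurd h' hlam0.ne'
      · exact sub_eq_zero.mp h'
    · intro h
      have : S p - p = 0 := by rw [hsp, h, sub_self, smul_zero]
      exact sub_eq_zero.mp this
  -- get the fixed point from the iterates starting at 0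
  obtain ⟨p, hpfix, _⟩ := conv (fun n => S^[n] 0)
    (fun n => Function.iterate_succ_apply' S n 0)
  have hTp : T p = p := (hST p).mp hpfix
  have huniq : ∀ q : X, T q = q → q = p := by
    intro q hq
    by_contra hne
    have hSq : S q = q := (hST q).mpr hq
    have := key q p
    rw [hSq, hpfix] at this
    simp only [sub_self, norm_zero, max_self, mul_zero] at this
    exact hne (sub_eq_zero.mp (norm_le_zero_iff.mp this))
  refine ⟨p, ⟨hTp, huniq⟩, lam, hlam0, hlam1, ?_⟩
  intro u hu
  obtain ⟨q, hqfix, hqlim⟩ := conv u (fun n => hu n)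
  have : q = p := huniq q ((hST q).mp hqfix)
  rwa [this] at hqlim
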